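/- Let X be a simplicial complex and X' a subcomplex of X. Then for all k \geq 0 and 1 \leq i \leq f_k(X'), \lambda_i(L_k(X')) \geq \lambda_i(L_k(X)) - (k+2) max_{\sigma \in X'(k)} (deg_X(\sigma) - deg_{X'}(\sigma)). -/

import Mathlib

open Finset Matrix BigOperators

noncomputable section

/-- An abstract simplicial complex on the vertex set `Fin n`
(faces are finite sets of vertices, closed under taking subsets,
containing the empty face). -/
structure SC (n : ℕ) where
  faces : Finset (Finset (Fin n))
  empty_mem : ∅ ∈ faces
  down_closed : ∀ ⦃σ⦄, σ ∈ faces → ∀ ⦃τ : Finset (Fin n)⦄, τ ⊆ σ → τ ∈ faces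

namespace SC

variable {n : ℕ}

/-- the faces with exactly `k` vertices, i.e. the faces of dimension `k-1`;
so `X.face (k+1)` plays the role of `X(k)` in the paper. -/
abbrev face (X : SC n) (k : ℕ) : Type := {σ : Finset (Fin n) // σ ∈ X.faces ∧ σ.card = k}

/-- the incidence sign `(τ:σ) = (-1)^{#{v ∈ τ : v < u}}`, `u` the unique vertex of `τ \ σ`
(meaningful when `σ ⊂ τ` with `|τ \ σ| = 1`). -/
def iSgn (σ τ : Finset (Fin n)) : ℝ :=
  ∑ u ∈ τ \ σ, (-1 : ℝ) ^ (τ.filter (fun v => v < u)).card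

/-- the boundary matrix from `(k+1)`-element faces to `k`-element faces
(i.e. `∂_k` of the paper, in the paper's dimension indexing). -/
def bdry (X : SC n) (k : ℕ) : Matrix (X.face k) (X.face (k+1)) ℝ :=
  Matrix.of fun σ τ => if σ.1 ⊆ τ.1 then iSgn σ.1 τ.1 else 0

/-- the `k`-dimensional combinatorial Laplacian `L_k(X)`,
indexed by faces with `k+1` vertices. -/
def lap (X : SC n) (k : ℕ) : Matrix (X.face (k+1)) (X.face (k+1)) ℝ :=
  X.bdry (k+1) * (X.bdry (k+1))ᴴ + (X.bdry k)ᴴ * X.bdry k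

/-- degree of the vertex `u` in the 1-skeleton graph `G_X`. -/
def gdeg (X : SC n) (u : Fin n) : ℕ :=
  (Finset.univ.filter (fun v => v ≠ u ∧ insert u {v} ∈ X.faces)).card

/-- the graph Laplacian `L(G_X)` of the 1-skeleton `G_X`. -/
def glap (X : SC n) : Matrix (Fin n) (Fin n) ℝ :=
  Matrix.of fun u v =>
    if u = v then (X.gdeg u : ℝ) else if insert u {v} ∈ X.faces then -1 else 0

/-- degree of a face: the number of faces of `X` with one more vertex containing it. -/
def fdeg (X : SC n) (σ : Finset (Fin n)) : ℕ :=
  (X.faces.filter (fun τ => τ.card = σ.card + 1 ∧ σ ⊆ τ)).card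

/-- the vertex `u` belongs to the link of `σ` in `X`. -/
def vLk (X : SC n) (u : Fin n) (σ : Finset (Fin n)) : Prop :=
  u ∉ σ ∧ insert u σ ∈ X.faces

instance (X : SC n) (u : Fin n) (σ : Finset (Fin n)) : Decidable (X.vLk u σ) := by
  unfold vLk; infer_instance

/-- the set `σ[j]`: vertices `u ∉ lk_X(σ)` with `u ∈ lk_X(v)` for all `v ∈ σ` and
`|{w ∈ σ : u ∈ lk_X(σ \ {w})}| = j`. -/
def dset (X : SC n) (σ : Finset (Fin n)) (j : ℕ) : Finset (Fin n) :=
  Finset.univ.filter (fun u => ¬ X.vLk u σ ∧ (∀ v ∈ σ, X.vLk u {v}) ∧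
    (σ.filter (fun w => X.vLk u (σ.erase w))).card = j)

/-- `X.nonface k` is the set of `k`-element vertex subsets that are not faces;
so `X.nonface (k+1)` is `\overline{X(k)}` of the paper. -/
def nonface (X : SC n) (k : ℕ) : Finset (Finset (Fin n)) :=
  (Finset.powersetCard k (Finset.univ : Finset (Fin n))).filter (fun σ => σ ∉ X.faces)

end SC

/-- the all-ones matrix `J`. -/
def Jmat (n : ℕ) : Matrix (Fin n) (Fin n) ℝ := Matrix.of fun _ _ => 1

open scoped Classical in
/-- the eigenvalues of a real symmetric matrix, sorted increasingly (junk `[]` otherwise). -/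
def eigList {m : Type*} [Fintype m] [DecidableEq m] (A : Matrix m m ℝ) : List ℝ :=
  if h : A.IsHermitian then (Finset.univ.val.map h.eigenvalues).sort (· ≤ ·) else []

/-- `λ_i(A)`: the `i`-th smallest eigenvalue (1-based). -/
def ithEig {m : Type*} [Fintype m] [DecidableEq m] (A : Matrix m m ℝ) (i : ℕ) : ℝ :=
  (eigList A).getD (i - 1) 0

/-- `S_{k,i}(A)`: the `i`-th smallest (1-based) element of the multiset of sums of `k`
eigenvalues `∑_{j ∈ A} λ_j(A)` over all `k`-element index subsets. -/
def Ssum {n : ℕ} (A : Matrix (Fin n) (Fin n) ℝ) (k i : ℕ) : ℝ :=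
  ((((Finset.univ : Finset (Fin n)).powersetCard k).val.map
      (fun S : Finset (Fin n) => ∑ j ∈ S, (eigList A).getD (j : ℕ) 0)).sort (· ≤ ·)).getD (i - 1) 0

/-- `max_{σ ∈ X(k)} ∑_{j=0}^{k+1} (j+1)|σ[j]|`. -/
def maxD {n : ℕ} (X : SC n) (k : ℕ) : ℕ :=
  Finset.univ.sup fun σ : X.face (k+1) =>
    ∑ j ∈ Finset.range (k+2), (j+1) * (X.dset σ.1 j).card

/-- the matrix `P` of the decomposition `L_k(X) = Q - P`. -/
def Pmat {n : ℕ} (X : SC n) (k : ℕ) : Matrix (X.face (k+1)) (X.face (k+1)) ℝ :=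
  Matrix.of fun σ τ =>
    if σ = τ then (∑ v ∈ σ.1, (X.gdeg v : ℝ)) - (X.fdeg σ.1 : ℝ)
    else if (σ.1 ∩ τ.1).card = k ∧ σ.1 ∪ τ.1 ∉ X.faces ∧ (σ.1 \ τ.1) ∪ (τ.1 \ σ.1) ∈ X.faces then
      -(SC.iSgn (σ.1 ∩ τ.1) σ.1 * SC.iSgn (σ.1 ∩ τ.1) τ.1)
    else 0

/-- the matrix `Q` of the decomposition `L_k(X) = Q - P`. -/
def Qmat {n : ℕ} (X : SC n) (k : ℕ) : Matrix (X.face (k+1)) (X.face (k+1)) ℝ :=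
  Matrix.of fun σ τ =>
    if σ = τ then (∑ v ∈ σ.1, (X.gdeg v : ℝ)) + (k : ℝ) + 1
    else if (σ.1 ∩ τ.1).card = k ∧ σ.1 ∪ τ.1 ∉ X.faces ∧ (σ.1 \ τ.1) ∪ (τ.1 \ σ.1) ∉ X.faces then
      SC.iSgn (σ.1 ∩ τ.1) σ.1 * SC.iSgn (σ.1 ∩ τ.1) τ.1
    else 0

/-- incidence sign with values in an arbitrary field. -/
def iSgnF {F : Type*} [Field F] {n : ℕ} (σ τ : Finset (Fin n)) : F :=
  ∑ u ∈ τ \ σ, (-1 : F) ^ (τ.filter (fun v => v < u)).card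

/-- the `k`-th additive compound matrix `M^{[k]}`, indexed by `k`-element subsets of `Fin n`. -/
def addCompound {F : Type*} [Field F] {n : ℕ} (M : Matrix (Fin n) (Fin n) F) (k : ℕ) :
    Matrix {S : Finset (Fin n) // S.card = k} {S : Finset (Fin n) // S.card = k} F :=
  Matrix.of fun σ τ =>
    if σ = τ then ∑ i ∈ σ.1, M i i
    else if (σ.1 ∩ τ.1).card = k - 1 then
      (iSgnF (σ.1 ∩ τ.1) σ.1 * iSgnF (σ.1 ∩ τ.1) τ.1) *
        ∑ i ∈ σ.1 \ τ.1, ∑ j ∈ τ.1 \ σ.1, M i j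
    else 0

end

noncomputable section AuxProof
open SC
open scoped InnerProductSpace

set_option linter.unusedSectionVars false
section SpecCore

open scoped InnerProductSpace

variable {m : Type*} [Fintype m] [DecidableEq m]

lemma euclid_inner_eq (x y : EuclideanSpace ℝ m) : ⟪x, y⟫_ℝ = (x : m → ℝ) ⬝ᵥ (y : m → ℝ) := by
  simp [PiLp.inner_apply, dotProduct, RCLike.inner_apply, mul_comm]

variable {ι : Type*} [Fintype ι]

lemma onb_normsq_eq (b : OrthonormalBasis ι ℝ (EuclideanSpace ℝ m)) (x : EuclideanSpace ℝ m) :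
    ‖x‖ ^ 2 = ∑ j, (b.repr x j) ^ 2 := by
  have h := b.repr.norm_map x
  rw [← h, EuclideanSpace.norm_eq]
  rw [Real.sq_sqrt (by positivity)]
  simp [sq_abs]

lemma onb_quad_eq (b : OrthonormalBasis ι ℝ (EuclideanSpace ℝ m))
    (T : EuclideanSpace ℝ m →ₗ[ℝ] EuclideanSpace ℝ m)
    (μ : ι → ℝ) (hb : ∀ j, T (b j) = μ j • b j) (x : EuclideanSpace ℝ m) :
    ⟪x, T x⟫_ℝ = ∑ j, μ j * (b.repr x j) ^ 2 := by
  conv_lhs => rw [← b.sum_repr x]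
  rw [map_sum, inner_sum]
  congr 1
  ext j
  rw [_root_.map_smul, hb j, smul_smul, inner_smul_right]
  have : ⟪(∑ i, b.repr x i • b i : EuclideanSpace ℝ m), b j⟫_ℝ = b.repr x j := by
    rw [b.sum_repr x, b.repr_apply_apply, real_inner_comm]
  rw [this]
  ring

end SpecCore

section SpecCore2
open scoped InnerProductSpace
set_option linter.unusedSectionVars false

variable {m : Type*} [Fintype m] [DecidableEq m] {ι : Type*} [Fintype ι]

lemma onb_repr_zero (b : OrthonormalBasis ι ℝ (EuclideanSpace ℝ m)) (S : Set ι)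
    {x : EuclideanSpace ℝ m} (hx : x ∈ Submodule.span ℝ (⇑b '' S)) {j : ι} (hj : j ∉ S) :
    b.repr x j = 0 := by
  rw [b.repr_apply_apply]
  induction hx using Submodule.span_induction with
  | mem y hy =>
    obtain ⟨s, hs, rfl⟩ := hy
    exact b.orthonormal.2 (fun h => hj (h ▸ hs))
  | zero => simp
  | add y z _ _ hy hz => rw [inner_add_right, hy, hz]; ring
  | smul c y _ hy => rw [inner_smul_right, hy]; ring

lemma onb_quad_le (b : OrthonormalBasis ι ℝ (EuclideanSpace ℝ m))
    (T : EuclideanSpace ℝ m →ₗ[ℝ] EuclideanSpace ℝ m)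
    (μ : ι → ℝ) (hb : ∀ j, T (b j) = μ j • b j) (S : Set ι) {x : EuclideanSpace ℝ m}
    (hx : x ∈ Submodule.span ℝ (⇑b '' S)) {c : ℝ} (hc : ∀ j ∈ S, μ j ≤ c) :
    ⟪x, T x⟫_ℝ ≤ c * ‖x‖ ^ 2 := by
  rw [onb_quad_eq b T μ hb x, onb_normsq_eq b x, Finset.mul_sum]
  apply Finset.sum_le_sum
  intro j _
  by_cases hj : j ∈ S
  · nlinarith [sq_nonneg (b.repr x j), hc j hj]
  · rw [onb_repr_zero b S hx hj]; simp

lemma onb_quad_ge (b : OrthonormalBasis ι ℝ (EuclideanSpace ℝ m))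
    (T : EuclideanSpace ℝ m →ₗ[ℝ] EuclideanSpace ℝ m)
    (μ : ι → ℝ) (hb : ∀ j, T (b j) = μ j • b j) (S : Set ι) {x : EuclideanSpace ℝ m}
    (hx : x ∈ Submodule.span ℝ (⇑b '' S)) {c : ℝ} (hc : ∀ j ∈ S, c ≤ μ j) :
    c * ‖x‖ ^ 2 ≤ ⟪x, T x⟫_ℝ := by
  rw [onb_quad_eq b T μ hb x, onb_normsq_eq b x, Finset.mul_sum]
  apply Finset.sum_le_sum
  intro j _
  by_cases hj : j ∈ S
  · nlinarith [sq_nonneg (b.repr x j), hc j hj]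
  · rw [onb_repr_zero b S hx hj]; simp

lemma onb_span_finrank (b : OrthonormalBasis ι ℝ (EuclideanSpace ℝ m)) (S : Finset ι) :
    Module.finrank ℝ (Submodule.span ℝ (⇑b '' ↑S)) = S.card := by
  have li : LinearIndependent ℝ (fun s : {x // x ∈ S} => b s.1) :=
    b.orthonormal.linearIndependent.comp _ Subtype.val_injective
  have himg : ⇑b '' ↑S = Set.range (fun s : {x // x ∈ S} => b s.1) := by
    ext y; simp
  rw [himg, finrank_span_eq_card li, Fintype.card_coe]

lemma exists_ne_zero_mem_two (U W : Submodule ℝ (EuclideanSpace ℝ m))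
    (h : Fintype.card m < Module.finrank ℝ U + Module.finrank ℝ W) :
    ∃ x : EuclideanSpace ℝ m, x ≠ 0 ∧ x ∈ U ∧ x ∈ W := by
  have heq := Submodule.finrank_sup_add_finrank_inf_eq U W
  have h2 : Module.finrank ℝ ↥(U ⊔ W) ≤ Module.finrank ℝ (EuclideanSpace ℝ m) :=
    Submodule.finrank_le _
  rw [finrank_euclideanSpace] at h2
  have h3 : 0 < Module.finrank ℝ ↥(U ⊓ W) := by omega
  have hbot : U ⊓ W ≠ ⊥ := by
    intro hb
    rw [hb, finrank_bot] at h3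
    omega
  obtain ⟨x, hx, hx0⟩ := Submodule.exists_mem_ne_zero_of_ne_bot hbot
  exact ⟨x, hx0, (Submodule.mem_inf.mp hx).1, (Submodule.mem_inf.mp hx).2⟩

end SpecCore2

section SortedData
open scoped InnerProductSpace
set_option linter.unusedSectionVars false

variable {m : Type*} [Fintype m] [DecidableEq m] {A : Matrix m m ℝ}

/-- index equiv sorting the eigenvalues -/
def sIdx (hA : A.IsHermitian) : Fin (Fintype.card m) ≃ m :=
  (Tuple.sort (hA.eigenvalues ∘ (Fintype.equivFin m).symm)).trans (Fintype.equivFin m).symm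

def sEig (hA : A.IsHermitian) : Fin (Fintype.card m) → ℝ := hA.eigenvalues ∘ sIdx hA

lemma sEig_monotone (hA : A.IsHermitian) : Monotone (sEig hA) :=
  Tuple.monotone_sort (hA.eigenvalues ∘ (Fintype.equivFin m).symm)

def sBas (hA : A.IsHermitian) : OrthonormalBasis (Fin (Fintype.card m)) ℝ (EuclideanSpace ℝ m) :=
  hA.eigenvectorBasis.reindex (sIdx hA).symm

lemma sBas_apply (hA : A.IsHermitian) (j : Fin (Fintype.card m)) :
    sBas hA j = hA.eigenvectorBasis (sIdx hA j) := by
  simp [sBas, OrthonormalBasis.reindex_apply]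

lemma sBas_eigen (hA : A.IsHermitian) (j : Fin (Fintype.card m)) :
    Matrix.toEuclideanLin A (sBas hA j) = sEig hA j • sBas hA j := by
  rw [sBas_apply]
  apply (WithLp.equiv 2 (m → ℝ)).injective
  have := hA.mulVec_eigenvectorBasis (sIdx hA j)
  exact this

lemma eigList_eq (hA : A.IsHermitian) : eigList A = List.ofFn (sEig hA) := by
  rw [eigList, dif_pos hA]
  apply List.Perm.eq_of_pairwise' (Multiset.pairwise_sort _ _)
    (Monotone.sortedLE_ofFn (sEig_monotone hA)).pairwise
  rw [← Multiset.coe_eq_coe, Multiset.sort_eq]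
  have : (↑(List.ofFn (sEig hA)) : Multiset ℝ) = Multiset.map (sEig hA) Finset.univ.val := by
    rw [← Fin.univ_val_map]
  rw [this, sEig]
  have : Multiset.map (hA.eigenvalues ∘ ⇑(sIdx hA)) Finset.univ.val
      = Multiset.map hA.eigenvalues (Multiset.map (⇑(sIdx hA)) Finset.univ.val) := by
    rw [Multiset.map_map]
  rw [this]
  congr 1
  symm
  have := Finset.map_univ_equiv (sIdx hA)
  calc Multiset.map (⇑(sIdx hA)) Finset.univ.val
      = (Finset.univ.map (sIdx hA).toEmbedding).val := rfl
    _ = Finset.univ.val := by rw [this]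

lemma ithEig_eq (hA : A.IsHermitian) (i : ℕ) (h1 : 1 ≤ i) (h2 : i ≤ Fintype.card m) :
    ithEig A i = sEig hA ⟨i - 1, by omega⟩ := by
  rw [ithEig, eigList_eq hA]
  rw [List.getD_eq_getElem _ _ (by rw [List.length_ofFn]; omega)]
  simp [List.getElem_ofFn]

end SortedData

section MainAbstract
open scoped InnerProductSpace
set_option linter.unusedSectionVars false

variable {m : Type*} [Fintype m] [DecidableEq m]

lemma toEuclideanLin_eigen {A : Matrix m m ℝ} (hA : A.IsHermitian) (j : m) :
    Matrix.toEuclideanLin A (hA.eigenvectorBasis j) = hA.eigenvalues j • hA.eigenvectorBasis j := by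
  apply (WithLp.equiv 2 (m → ℝ)).injective
  exact hA.mulVec_eigenvectorBasis j

lemma weyl_bound {A B : Matrix m m ℝ} (hA : A.IsHermitian) (hB : B.IsHermitian) (c : ℝ)
    (hE : ∀ x : EuclideanSpace ℝ m, ⟪x, Matrix.toEuclideanLin (A - B) x⟫_ℝ ≤ c * ‖x‖ ^ 2)
    (i : ℕ) (h1 : 1 ≤ i) (h2 : i ≤ Fintype.card m) :
    ithEig A i - c ≤ ithEig B i := by
  have hN : i - 1 < Fintype.card m := by omega
  set idx : Fin (Fintype.card m) := ⟨i - 1, hN⟩ with hidx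
  obtain ⟨x, hx0, hxU, hxW⟩ := exists_ne_zero_mem_two
      (Submodule.span ℝ (⇑(sBas hA) '' ↑(Finset.Ici idx)))
      (Submodule.span ℝ (⇑(sBas hB) '' ↑(Finset.Iic idx))) (by
    rw [onb_span_finrank, onb_span_finrank, Fin.card_Ici, Fin.card_Iic]
    simp only [hidx]
    omega)
  have hnorm : (0:ℝ) < ‖x‖ ^ 2 := by
    have := norm_pos_iff.mpr hx0
    positivity
  have hlow : sEig hA idx * ‖x‖ ^ 2 ≤ ⟪x, Matrix.toEuclideanLin A x⟫_ℝ :=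
    onb_quad_ge (sBas hA) _ (sEig hA) (sBas_eigen hA) _ hxU
      (fun j hj => sEig_monotone hA (Finset.mem_Ici.mp (Finset.mem_coe.mp hj)))
  have hupp : ⟪x, Matrix.toEuclideanLin B x⟫_ℝ ≤ sEig hB idx * ‖x‖ ^ 2 :=
    onb_quad_le (sBas hB) _ (sEig hB) (sBas_eigen hB) _ hxW
      (fun j hj => sEig_monotone hB (Finset.mem_Iic.mp (Finset.mem_coe.mp hj)))
  have hsplit : ⟪x, Matrix.toEuclideanLin A x⟫_ℝ
      = ⟪x, Matrix.toEuclideanLin B x⟫_ℝ + ⟪x, Matrix.toEuclideanLin (A - B) x⟫_ℝ := by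
    rw [← inner_add_right]
    congr 1
    rw [← LinearMap.add_apply]
    congr 1
    have : B + (A - B) = A := by abel
    rw [← map_add, this]
  rw [ithEig_eq hA i h1 h2, ithEig_eq hB i h1 h2]
  have hEx := hE x
  have key : sEig hA ⟨i-1, by omega⟩ * ‖x‖^2 ≤ (sEig hB ⟨i-1, by omega⟩ + c) * ‖x‖^2 := by
    calc sEig hA ⟨i-1, by omega⟩ * ‖x‖^2 ≤ ⟪x, Matrix.toEuclideanLin A x⟫_ℝ := hlow
    _ = ⟪x, Matrix.toEuclideanLin B x⟫_ℝ + ⟪x, Matrix.toEuclideanLin (A - B) x⟫_ℝ := hsplit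
    _ ≤ sEig hB ⟨i-1, by omega⟩ * ‖x‖^2 + c * ‖x‖^2 := add_le_add hupp hEx
    _ = (sEig hB ⟨i-1, by omega⟩ + c) * ‖x‖^2 := by ring
  have := le_of_mul_le_mul_right key hnorm
  linarith

lemma eigenvalues_le_of_rows {A : Matrix m m ℝ} (hA : A.IsHermitian) (c : ℝ)
    (h : ∀ σ, A σ σ + ∑ τ ∈ Finset.univ.erase σ, |A σ τ| ≤ c) (j : m) :
    hA.eigenvalues j ≤ c := by
  have hnz : (hA.eigenvectorBasis j : m → ℝ) ≠ 0 := by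
    have h1 := hA.eigenvectorBasis.orthonormal.1 j
    intro h0
    have : (hA.eigenvectorBasis j : EuclideanSpace ℝ m) = 0 := (WithLp.ofLp_eq_zero 2).mp h0
    rw [this] at h1
    simp at h1
  have hev : Module.End.HasEigenvalue (Matrix.toLin' A) (hA.eigenvalues j) := by
    apply Module.End.hasEigenvalue_of_hasEigenvector
      (x := (hA.eigenvectorBasis j : m → ℝ))
    constructor
    · rw [Module.End.mem_eigenspace_iff, Matrix.toLin'_apply']
      exact hA.mulVec_eigenvectorBasis j
    · exact hnz
  obtain ⟨σ, hσ⟩ := eigenvalue_mem_ball hev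
  rw [Metric.mem_closedBall, Real.dist_eq] at hσ
  have h2 := (abs_le.mp hσ).2
  have h3 := h σ
  simp only [Real.norm_eq_abs] at h2
  linarith

lemma quad_le_of_eig_le {A : Matrix m m ℝ} (hA : A.IsHermitian) (c : ℝ)
    (h : ∀ j, hA.eigenvalues j ≤ c) (x : EuclideanSpace ℝ m) :
    ⟪x, Matrix.toEuclideanLin A x⟫_ℝ ≤ c * ‖x‖ ^ 2 := by
  apply onb_quad_le hA.eigenvectorBasis _ hA.eigenvalues (toEuclideanLin_eigen hA)
    Set.univ ?_ (fun j _ => h j)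
  rw [Set.image_univ]
  have hsp : Submodule.span ℝ (Set.range ⇑hA.eigenvectorBasis) = ⊤ := by
    have := hA.eigenvectorBasis.toBasis.span_eq
    rwa [OrthonormalBasis.coe_toBasis] at this
  rw [hsp]
  trivial

end MainAbstract

section Cauchy
open scoped InnerProductSpace
set_option linter.unusedSectionVars false

variable {m m' : Type*} [Fintype m] [DecidableEq m] [Fintype m'] [DecidableEq m']

def embMat (f : m' → m) : Matrix m m' ℝ := Matrix.of fun j a => if f a = j then 1 else 0

lemma dot_pull (P : Matrix m m' ℝ) (x : m' → ℝ) (z : m → ℝ) :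
    (P *ᵥ x) ⬝ᵥ z = x ⬝ᵥ (Pᵀ *ᵥ z) := by
  rw [dotProduct_comm, dotProduct_mulVec, dotProduct_comm]
  congr 1
  exact (Matrix.mulVec_transpose P z).symm

lemma embMat_transpose_mul_self {f : m' → m} (hf : Function.Injective f) :
    (embMat f)ᵀ * embMat f = 1 := by
  ext a b
  simp only [Matrix.mul_apply, embMat, Matrix.of_apply, Matrix.transpose_apply,
    Matrix.one_apply, ite_mul, one_mul, zero_mul]
  rw [Finset.sum_ite_eq]
  simp [hf.eq_iff, eq_comm]

lemma embMat_conj (f : m' → m) (A : Matrix m m ℝ) :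
    (embMat f)ᵀ * A * embMat f = A.submatrix f f := by
  ext a b
  simp only [Matrix.mul_apply, embMat, Matrix.of_apply, Matrix.transpose_apply,
    Matrix.submatrix_apply, ite_mul, one_mul, zero_mul, mul_ite, mul_one, mul_zero,
    Finset.sum_ite_eq, Finset.mem_univ, if_true]

lemma cauchy_bound {A : Matrix m m ℝ} (hA : A.IsHermitian) (f : m' → m)
    (hf : Function.Injective f) (i : ℕ) (h1 : 1 ≤ i) (h2 : i ≤ Fintype.card m') :
    ithEig A i ≤ ithEig (A.submatrix f f) i := by
  have hB : (A.submatrix f f).IsHermitian := hA.submatrix f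
  have hcard : Fintype.card m' ≤ Fintype.card m := Fintype.card_le_of_injective f hf
  have hNm : i - 1 < Fintype.card m := by omega
  have hNm' : i - 1 < Fintype.card m' := by omega
  set idxA : Fin (Fintype.card m) := ⟨i-1, hNm⟩ with hidxA
  set idxB : Fin (Fintype.card m') := ⟨i-1, hNm'⟩ with hidxB
  set φ : EuclideanSpace ℝ m' →ₗ[ℝ] EuclideanSpace ℝ m := Matrix.toEuclideanLin (embMat f) with hφ
  have hφapp : ∀ x : EuclideanSpace ℝ m', (φ x : m → ℝ) = embMat f *ᵥ (x : m' → ℝ) :=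
    fun x => rfl
  have hinner : ∀ x y : EuclideanSpace ℝ m', ⟪φ x, φ y⟫_ℝ = ⟪x, y⟫_ℝ := by
    intro x y
    rw [euclid_inner_eq, euclid_inner_eq, hφapp, hφapp, dot_pull, Matrix.mulVec_mulVec,
      embMat_transpose_mul_self hf, Matrix.one_mulVec]
  have hnormφ : ∀ x : EuclideanSpace ℝ m', ‖φ x‖ ^ 2 = ‖x‖ ^ 2 := by
    intro x
    rw [← real_inner_self_eq_norm_sq, ← real_inner_self_eq_norm_sq, hinner]
  have hinjφ : Function.Injective ⇑φ := by
    intro x y hxy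
    have h0 : φ (x - y) = 0 := by rw [map_sub, hxy, sub_self]
    have : ‖x - y‖ ^ 2 = 0 := by rw [← hnormφ, h0]; simp
    have : ‖x - y‖ = 0 := by nlinarith [norm_nonneg (x - y)]
    rw [norm_eq_zero] at this
    exact sub_eq_zero.mp this
  have hquad : ∀ x : EuclideanSpace ℝ m',
      ⟪φ x, Matrix.toEuclideanLin A (φ x)⟫_ℝ =
        ⟪x, Matrix.toEuclideanLin (A.submatrix f f) x⟫_ℝ := by
    intro x
    rw [euclid_inner_eq, euclid_inner_eq]
    have hAapp : (Matrix.toEuclideanLin A (φ x) : m → ℝ) = A *ᵥ (φ x : m → ℝ) := rfl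
    have hBapp : (Matrix.toEuclideanLin (A.submatrix f f) x : m' → ℝ)
        = (A.submatrix f f) *ᵥ (x : m' → ℝ) := rfl
    rw [hAapp, hBapp, hφapp, dot_pull, Matrix.mulVec_mulVec, Matrix.mulVec_mulVec,
      embMat_conj]
  set Wlow := Submodule.span ℝ (⇑(sBas hB) '' ↑(Finset.Iic idxB)) with hWlow
  have hrank : Module.finrank ℝ (Submodule.map φ Wlow) = i - 1 + 1 := by
    rw [← LinearEquiv.finrank_eq (Submodule.equivMapOfInjective φ hinjφ Wlow), hWlow,
      onb_span_finrank, Fin.card_Iic]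
  obtain ⟨y, hy0, hyU, hyW⟩ := exists_ne_zero_mem_two
      (Submodule.span ℝ (⇑(sBas hA) '' ↑(Finset.Ici idxA))) (Submodule.map φ Wlow) (by
    rw [onb_span_finrank, Fin.card_Ici, hrank]
    simp only [hidxA]
    omega)
  obtain ⟨w, hw, rfl⟩ := Submodule.mem_map.mp hyW
  have hw0 : w ≠ 0 := by
    intro h0
    apply hy0
    rw [h0, map_zero]
  have hnorm : (0:ℝ) < ‖w‖ ^ 2 := by
    have := norm_pos_iff.mpr hw0
    positivity
  have hlow : sEig hA idxA * ‖φ w‖ ^ 2 ≤ ⟪φ w, Matrix.toEuclideanLin A (φ w)⟫_ℝ :=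
    onb_quad_ge (sBas hA) _ (sEig hA) (sBas_eigen hA) _ hyU
      (fun j hj => sEig_monotone hA (Finset.mem_Ici.mp (Finset.mem_coe.mp hj)))
  have hupp : ⟪w, Matrix.toEuclideanLin (A.submatrix f f) w⟫_ℝ ≤ sEig hB idxB * ‖w‖ ^ 2 :=
    onb_quad_le (sBas hB) _ (sEig hB) (sBas_eigen hB) _ hw
      (fun j hj => sEig_monotone hB (Finset.mem_Iic.mp (Finset.mem_coe.mp hj)))
  rw [ithEig_eq hA i h1 (by omega), ithEig_eq hB i h1 h2]
  have key : sEig hA idxA * ‖w‖ ^ 2 ≤ sEig hB idxB * ‖w‖ ^ 2 := by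
    calc sEig hA idxA * ‖w‖ ^ 2 = sEig hA idxA * ‖φ w‖ ^ 2 := by rw [hnormφ]
    _ ≤ ⟪φ w, Matrix.toEuclideanLin A (φ w)⟫_ℝ := hlow
    _ = ⟪w, Matrix.toEuclideanLin (A.submatrix f f) w⟫_ℝ := hquad w
    _ ≤ sEig hB idxB * ‖w‖ ^ 2 := hupp
  exact le_of_mul_le_mul_right key hnorm

end Cauchy

section Comb
set_option linter.unusedSectionVars false

variable {n : ℕ}

lemma iSgn_pm {σ τ : Finset (Fin n)} (h : σ ⊆ τ) (hc : τ.card = σ.card + 1) :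
    iSgn σ τ = 1 ∨ iSgn σ τ = -1 := by
  have hd : (τ \ σ).card = 1 := by
    rw [Finset.card_sdiff_of_subset h, hc]; omega
  obtain ⟨u, hu⟩ := Finset.card_eq_one.mp hd
  rw [iSgn, hu, Finset.sum_singleton]
  rcases Nat.even_or_odd (τ.filter (fun v => v < u)).card with he | ho
  · left; exact he.neg_one_pow
  · right; exact ho.neg_one_pow

lemma iSgn_mul_self {σ τ : Finset (Fin n)} (h : σ ⊆ τ) (hc : τ.card = σ.card + 1) :
    iSgn σ τ * iSgn σ τ = 1 := by
  rcases iSgn_pm h hc with h1 | h1 <;> rw [h1] <;> norm_num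

lemma abs_iSgn {σ τ : Finset (Fin n)} (h : σ ⊆ τ) (hc : τ.card = σ.card + 1) :
    |iSgn σ τ| = 1 := by
  rcases iSgn_pm h hc with h1 | h1 <;> rw [h1] <;> norm_num

lemma sum_face (X : SC n) (j : ℕ) (g : Finset (Fin n) → ℝ) :
    ∑ ρ : X.face j, g ρ.1 = ∑ ρ ∈ X.faces.filter (fun ρ => ρ.card = j), g ρ := by
  rw [Finset.sum_subtype (X.faces.filter (fun ρ => ρ.card = j))
    (fun x => Finset.mem_filter) g]

lemma lap_apply (X : SC n) (k : ℕ) (σ τ : X.face (k+1)) :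
    X.lap k σ τ =
      (∑ ρ : X.face (k+2),
        (if σ.1 ⊆ ρ.1 then iSgn σ.1 ρ.1 else 0) * (if τ.1 ⊆ ρ.1 then iSgn τ.1 ρ.1 else 0))
      + ∑ η : X.face k,
        (if η.1 ⊆ σ.1 then iSgn η.1 σ.1 else 0) * (if η.1 ⊆ τ.1 then iSgn η.1 τ.1 else 0) := by
  simp [SC.lap, SC.bdry, Matrix.add_apply, Matrix.mul_apply, Matrix.conjTranspose_apply]

lemma down_eq (X : SC n) (k : ℕ) (σ τ : X.face (k+1)) :
    (∑ η : X.face k,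
      (if η.1 ⊆ σ.1 then iSgn η.1 σ.1 else 0) * (if η.1 ⊆ τ.1 then iSgn η.1 τ.1 else 0))
    = ∑ η ∈ Finset.powersetCard k (σ.1 ∩ τ.1), iSgn η σ.1 * iSgn η τ.1 := by
  rw [sum_face X k (fun η => (if η ⊆ σ.1 then iSgn η σ.1 else 0) * (if η ⊆ τ.1 then iSgn η τ.1 else 0))]
  rw [← Finset.sum_subset (s₁ := Finset.powersetCard k (σ.1 ∩ τ.1))
      (s₂ := X.faces.filter (fun ρ => ρ.card = k)) ?hsub ?hzero]
  · apply Finset.sum_congr rfl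
    intro η hη
    rw [Finset.mem_powersetCard] at hη
    rw [if_pos (hη.1.trans Finset.inter_subset_left), if_pos (hη.1.trans Finset.inter_subset_right)]
  case hsub =>
    intro η hη
    rw [Finset.mem_powersetCard] at hη
    rw [Finset.mem_filter]
    exact ⟨X.down_closed σ.2.1 (hη.1.trans Finset.inter_subset_left), hη.2⟩
  case hzero =>
    intro η hη hnmem
    rw [Finset.mem_filter] at hη
    rw [Finset.mem_powersetCard] at hnmem
    push_neg at hnmem
    by_cases h1 : η ⊆ σ.1
    · by_cases h2 : η ⊆ τ.1
      · exact absurd (hnmem (Finset.subset_inter h1 h2)) (by simp [hη.2])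
      · rw [if_neg h2, mul_zero]
    · rw [if_neg h1, zero_mul]

lemma up_diag (X : SC n) (k : ℕ) (σ : X.face (k+1)) :
    (∑ ρ : X.face (k+2),
      (if σ.1 ⊆ ρ.1 then iSgn σ.1 ρ.1 else 0) * (if σ.1 ⊆ ρ.1 then iSgn σ.1 ρ.1 else 0))
    = (X.fdeg σ.1 : ℝ) := by
  rw [sum_face X (k+2)
    (fun ρ => (if σ.1 ⊆ ρ then iSgn σ.1 ρ else 0) * (if σ.1 ⊆ ρ then iSgn σ.1 ρ else 0))]
  rw [← Finset.sum_subset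
    (Finset.filter_subset (fun ρ => σ.1 ⊆ ρ) (X.faces.filter (fun ρ => ρ.card = k+2))) ?van]
  case van =>
    intro ρ hρ hn
    rw [Finset.mem_filter] at hn
    have hns : ¬ σ.1 ⊆ ρ := fun hc => hn ⟨hρ, hc⟩
    rw [if_neg hns, zero_mul]
  have hone : ∀ ρ ∈ (X.faces.filter (fun ρ => ρ.card = k+2)).filter (fun ρ => σ.1 ⊆ ρ),
      (if σ.1 ⊆ ρ then iSgn σ.1 ρ else 0) * (if σ.1 ⊆ ρ then iSgn σ.1 ρ else 0) = 1 := by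
    intro ρ hρ
    rw [Finset.mem_filter] at hρ
    have h2 := (Finset.mem_filter.mp hρ.1).2
    rw [if_pos hρ.2]
    exact iSgn_mul_self hρ.2 (by rw [h2, σ.2.2])
  rw [Finset.sum_congr rfl hone, Finset.sum_const, nsmul_eq_mul, mul_one, SC.fdeg]
  apply congrArg
  apply congrArg
  rw [Finset.filter_filter]
  apply Finset.filter_congr
  intro ρ _
  rw [σ.2.2]

lemma union_card_of_subsets {k : ℕ} {σ τ ρ : Finset (Fin n)} (hσ : σ.card = k+1)
    (hτ : τ.card = k+1) (hne : σ ≠ τ) (hρ : ρ.card = k+2) (h1 : σ ⊆ ρ) (h2 : τ ⊆ ρ) :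
    ρ = σ ∪ τ ∧ (σ ∩ τ).card = k := by
  have hsub : σ ∪ τ ⊆ ρ := Finset.union_subset h1 h2
  have hint : (σ ∩ τ).card < k + 1 := by
    have hile : (σ ∩ τ).card ≤ σ.card := Finset.card_le_card Finset.inter_subset_left
    rcases lt_or_eq_of_le hile with h | h
    · omega
    · exfalso
      have hst : σ ∩ τ = σ := Finset.eq_of_subset_of_card_le Finset.inter_subset_left (by omega)
      have hsτ : σ ⊆ τ := hst ▸ Finset.inter_subset_right
      exact hne (Finset.eq_of_subset_of_card_le hsτ (by omega))
  have hcu : (σ ∪ τ).card + (σ ∩ τ).card = (k+1) + (k+1) := by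
    rw [Finset.card_union_add_card_inter, hσ, hτ]
  have hle : (σ ∪ τ).card ≤ k + 2 := hρ ▸ Finset.card_le_card hsub
  have hcard : (σ ∪ τ).card = k + 2 := by omega
  exact ⟨(Finset.eq_of_subset_of_card_le hsub (by omega)).symm, by omega⟩

lemma up_off (X : SC n) (k : ℕ) (σ τ : X.face (k+1)) (hne : σ.1 ≠ τ.1) :
    (∑ ρ : X.face (k+2),
      (if σ.1 ⊆ ρ.1 then iSgn σ.1 ρ.1 else 0) * (if τ.1 ⊆ ρ.1 then iSgn τ.1 ρ.1 else 0))
    = if (σ.1 ∩ τ.1).card = k ∧ σ.1 ∪ τ.1 ∈ X.faces then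
        iSgn σ.1 (σ.1 ∪ τ.1) * iSgn τ.1 (σ.1 ∪ τ.1) else 0 := by
  rw [sum_face X (k+2)
    (fun ρ => (if σ.1 ⊆ ρ then iSgn σ.1 ρ else 0) * (if τ.1 ⊆ ρ then iSgn τ.1 ρ else 0))]
  by_cases hC : (σ.1 ∩ τ.1).card = k ∧ σ.1 ∪ τ.1 ∈ X.faces
  · rw [if_pos hC]
    have hucard : (σ.1 ∪ τ.1).card = k + 2 := by
      have := Finset.card_union_add_card_inter σ.1 τ.1
      rw [σ.2.2, τ.2.2, hC.1] at this
      omega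
    rw [Finset.sum_eq_single_of_mem (σ.1 ∪ τ.1)
      (Finset.mem_filter.mpr ⟨hC.2, hucard⟩) ?hrest]
    · rw [if_pos Finset.subset_union_left, if_pos Finset.subset_union_right]
    case hrest =>
      intro ρ hρ hρne
      rw [Finset.mem_filter] at hρ
      by_cases h1 : σ.1 ⊆ ρ
      · by_cases h2 : τ.1 ⊆ ρ
        · exact absurd (union_card_of_subsets σ.2.2 τ.2.2 hne hρ.2 h1 h2).1 hρne
        · rw [if_neg h2, mul_zero]
      · rw [if_neg h1, zero_mul]
  · rw [if_neg hC]
    apply Finset.sum_eq_zero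
    intro ρ hρ
    rw [Finset.mem_filter] at hρ
    by_cases h1 : σ.1 ⊆ ρ
    · by_cases h2 : τ.1 ⊆ ρ
      · exfalso
        obtain ⟨hu, hic⟩ := union_card_of_subsets σ.2.2 τ.2.2 hne hρ.2 h1 h2
        exact hC ⟨hic, hu ▸ hρ.1⟩
      · rw [if_neg h2, mul_zero]
    · rw [if_neg h1, zero_mul]

lemma lap_herm (X : SC n) (k : ℕ) : (X.lap k).IsHermitian :=
  (Matrix.isHermitian_mul_conjTranspose_self _).add
    (Matrix.isHermitian_conjTranspose_mul_self _)

lemma fdeg_mono {X X' : SC n} (hsub : X'.faces ⊆ X.faces) (σ : Finset (Fin n)) :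
    X'.fdeg σ ≤ X.fdeg σ :=
  Finset.card_le_card (Finset.filter_subset_filter _ hsub)

/-- the inclusion of faces of the subcomplex -/
def fmap {X X' : SC n} (hsub : X'.faces ⊆ X.faces) (k : ℕ) : X'.face k → X.face k :=
  fun σ => ⟨σ.1, hsub σ.2.1, σ.2.2⟩

lemma fmap_val {X X' : SC n} (hsub : X'.faces ⊆ X.faces) (k : ℕ) (σ : X'.face k) :
    (fmap hsub k σ).1 = σ.1 := rfl

lemma fmap_inj {X X' : SC n} (hsub : X'.faces ⊆ X.faces) (k : ℕ) :
    Function.Injective (fmap hsub k) := by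
  intro a b hab
  have h2 : (fmap hsub k a).1 = (fmap hsub k b).1 := congrArg Subtype.val hab
  exact Subtype.ext h2

lemma Ediag {X X' : SC n} (hsub : X'.faces ⊆ X.faces) (k : ℕ) (σ : X'.face (k+1)) :
    X.lap k (fmap hsub (k+1) σ) (fmap hsub (k+1) σ) - X'.lap k σ σ
      = (X.fdeg σ.1 : ℝ) - (X'.fdeg σ.1 : ℝ) := by
  rw [lap_apply, lap_apply, down_eq, down_eq, up_diag X k (fmap hsub (k+1) σ),
    up_diag X' k σ, fmap_val]
  ring

lemma Eoff {X X' : SC n} (hsub : X'.faces ⊆ X.faces) (k : ℕ) (σ τ : X'.face (k+1))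
    (hne : σ ≠ τ) :
    X.lap k (fmap hsub (k+1) σ) (fmap hsub (k+1) τ) - X'.lap k σ τ
      = if (σ.1 ∩ τ.1).card = k ∧ σ.1 ∪ τ.1 ∈ X.faces ∧ σ.1 ∪ τ.1 ∉ X'.faces then
          iSgn σ.1 (σ.1 ∪ τ.1) * iSgn τ.1 (σ.1 ∪ τ.1) else 0 := by
  have hne1 : σ.1 ≠ τ.1 := fun h => hne (Subtype.ext h)
  have hne1' : (fmap hsub (k+1) σ).1 ≠ (fmap hsub (k+1) τ).1 := hne1
  rw [lap_apply, lap_apply, down_eq, down_eq,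
    up_off X k (fmap hsub (k+1) σ) (fmap hsub (k+1) τ) hne1', up_off X' k σ τ hne1,
    fmap_val, fmap_val]
  by_cases h1 : (σ.1 ∩ τ.1).card = k
  · by_cases h2 : σ.1 ∪ τ.1 ∈ X'.faces
    · have h3 : σ.1 ∪ τ.1 ∈ X.faces := hsub h2
      rw [if_pos ⟨h1, h3⟩, if_pos ⟨h1, h2⟩, if_neg (by tauto)]
      ring
    · by_cases h3 : σ.1 ∪ τ.1 ∈ X.faces
      · rw [if_pos ⟨h1, h3⟩, if_neg (by tauto), if_pos ⟨h1, h3, h2⟩]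
        ring
      · rw [if_neg (by tauto), if_neg (by tauto), if_neg (by tauto)]
        ring
  · rw [if_neg (by tauto), if_neg (by tauto), if_neg (by tauto)]
    ring

lemma Tcard {X X' : SC n} (hsub : X'.faces ⊆ X.faces) (k : ℕ) (σ : X'.face (k+1)) :
    (Finset.univ.filter (fun τ : X'.face (k+1) => τ ≠ σ ∧ (σ.1 ∩ τ.1).card = k ∧
        σ.1 ∪ τ.1 ∈ X.faces ∧ σ.1 ∪ τ.1 ∉ X'.faces)).card
      ≤ (k+1) * (X.fdeg σ.1 - X'.fdeg σ.1) := by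
  set R := (X.faces.filter (fun ρ => ρ.card = σ.1.card + 1 ∧ σ.1 ⊆ ρ)) \ (X'.faces.filter (fun ρ => ρ.card = σ.1.card + 1 ∧ σ.1 ⊆ ρ)) with hR
  have hRcard : R.card = X.fdeg σ.1 - X'.fdeg σ.1 := by
    rw [hR, Finset.card_sdiff_of_subset (Finset.filter_subset_filter _ hsub), SC.fdeg, SC.fdeg]
  rw [← hRcard]
  apply Finset.card_le_mul_card_image_of_maps_to
    (f := fun τ : X'.face (k+1) => σ.1 ∪ τ.1) (t := R)
  · intro τ hτ
    rw [Finset.mem_filter] at hτ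
    obtain ⟨-, hne, hic, hXm, hX'm⟩ := hτ
    have hcu : (σ.1 ∪ τ.1).card = σ.1.card + 1 := by
      have h := Finset.card_union_add_card_inter σ.1 τ.1
      rw [σ.2.2, τ.2.2, hic] at h
      rw [σ.2.2]
      omega
    rw [hR, Finset.mem_sdiff, Finset.mem_filter, Finset.mem_filter]
    exact ⟨⟨hXm, hcu, Finset.subset_union_left⟩, fun hc => hX'm hc.1⟩
  · intro ρ hρ
    rw [hR, Finset.mem_sdiff, Finset.mem_filter] at hρ
    obtain ⟨⟨hρX, hρc, hρs⟩, -⟩ := hρ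
    have hσmem : σ.1 ∈ Finset.powersetCard (k+1) ρ :=
      Finset.mem_powersetCard.mpr ⟨hρs, σ.2.2⟩
    have htc : ((Finset.powersetCard (k+1) ρ).erase σ.1).card = k + 1 := by
      rw [Finset.card_erase_of_mem hσmem, Finset.card_powersetCard, hρc, σ.2.2]
      rw [Nat.choose_succ_self_right]
      omega
    refine le_trans (Finset.card_le_card_of_injOn (fun τ => τ.1) ?_ ?_) (le_of_eq htc)
    · intro τ hτ
      rw [Finset.mem_coe, Finset.mem_filter, Finset.mem_filter] at hτ
      obtain ⟨⟨-, hτne, hτic, -, -⟩, hτu⟩ := hτ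
      rw [Finset.mem_coe, Finset.mem_erase, Finset.mem_powersetCard]
      refine ⟨fun h => hτne (Subtype.ext h), ?_, τ.2.2⟩
      rw [← hτu]
      exact Finset.subset_union_right
    · intro a _ b _ hab
      exact Subtype.ext hab

end Comb


end AuxProof
open SC
open scoped InnerProductSpace

/-- **Theorem 1.8.** For a subcomplex `X' ⊆ X`, `k ≥ 0`, `1 ≤ i ≤ f_k(X')`:
`λ_i(L_k(X')) ≥ λ_i(L_k(X)) - (k+2) max_{σ ∈ X'(k)} (deg_X(σ) - deg_{X'}(σ))`. -/
theorem stmt12 (n k : ℕ) (X X' : SC n) (hsub : X'.faces ⊆ X.faces)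
    (i : ℕ) (h1 : 1 ≤ i) (h2 : i ≤ Fintype.card (X'.face (k+1))) :
    ithEig (X'.lap k) i ≥ ithEig (X.lap k) i -
      ((k : ℝ) + 2) *
        ((Finset.univ.sup fun σ : X'.face (k+1) => X.fdeg σ.1 - X'.fdeg σ.1 : ℕ) : ℝ) := by
  set D : ℕ := Finset.univ.sup fun σ : X'.face (k+1) => X.fdeg σ.1 - X'.fdeg σ.1 with hD
  set c : ℝ := ((k:ℝ) + 2) * (D : ℝ) with hc
  have hlapX : (X.lap k).IsHermitian := lap_herm X k
  have hlapX' : (X'.lap k).IsHermitian := lap_herm X' k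
  set f := fmap hsub (k+1) with hf
  set Bsub := (X.lap k).submatrix f f with hB
  have hBh : Bsub.IsHermitian := hlapX.submatrix f
  have hEh : (Bsub - X'.lap k).IsHermitian := hBh.sub hlapX'
  have hrow : ∀ σ : X'.face (k+1),
      (Bsub - X'.lap k) σ σ + ∑ τ ∈ Finset.univ.erase σ, |(Bsub - X'.lap k) σ τ| ≤ c := by
    intro σ
    have hdσ : X.fdeg σ.1 - X'.fdeg σ.1 ≤ D := by
      rw [hD]
      exact Finset.le_sup (f := fun σ : X'.face (k+1) => X.fdeg σ.1 - X'.fdeg σ.1)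
        (Finset.mem_univ σ)
    have hfm : X'.fdeg σ.1 ≤ X.fdeg σ.1 := fdeg_mono hsub σ.1
    have hEσσ : (Bsub - X'.lap k) σ σ = ((X.fdeg σ.1 - X'.fdeg σ.1 : ℕ) : ℝ) := by
      rw [Matrix.sub_apply, hB, Matrix.submatrix_apply, hf, Ediag hsub k σ, Nat.cast_sub hfm]
    set T := Finset.univ.filter (fun τ : X'.face (k+1) => τ ≠ σ ∧ (σ.1 ∩ τ.1).card = k ∧
        σ.1 ∪ τ.1 ∈ X.faces ∧ σ.1 ∪ τ.1 ∉ X'.faces) with hT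
    have hEoffmem : ∀ τ ∈ T, |(Bsub - X'.lap k) σ τ| ≤ 1 := by
      intro τ hτ
      rw [hT, Finset.mem_filter] at hτ
      obtain ⟨-, hne, hic, hXm, hX'm⟩ := hτ
      have hval : (Bsub - X'.lap k) σ τ
          = iSgn σ.1 (σ.1 ∪ τ.1) * iSgn τ.1 (σ.1 ∪ τ.1) := by
        rw [Matrix.sub_apply, hB, Matrix.submatrix_apply, hf,
          Eoff hsub k σ τ (Ne.symm hne), if_pos ⟨hic, hXm, hX'm⟩]
      have hucard : (σ.1 ∪ τ.1).card = k + 2 := by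
        have h := Finset.card_union_add_card_inter σ.1 τ.1
        rw [σ.2.2, τ.2.2, hic] at h
        omega
      rw [hval, abs_mul, abs_iSgn Finset.subset_union_left (by rw [hucard, σ.2.2]),
        abs_iSgn Finset.subset_union_right (by rw [hucard, τ.2.2])]
      norm_num
    have hsum : ∑ τ ∈ Finset.univ.erase σ, |(Bsub - X'.lap k) σ τ| ≤ (T.card : ℝ) := by
      rw [← Finset.sum_subset (s₁ := T) (s₂ := Finset.univ.erase σ) ?sub ?van]
      case sub =>
        intro τ hτ
        rw [hT, Finset.mem_filter] at hτ
        exact Finset.mem_erase.mpr ⟨hτ.2.1, Finset.mem_univ τ⟩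
      case van =>
        intro τ hτe hτn
        have hne : τ ≠ σ := (Finset.mem_erase.mp hτe).1
        have hcond : ¬((σ.1 ∩ τ.1).card = k ∧ σ.1 ∪ τ.1 ∈ X.faces ∧ σ.1 ∪ τ.1 ∉ X'.faces) := by
          intro hcnd
          apply hτn
          rw [hT, Finset.mem_filter]
          exact ⟨Finset.mem_univ τ, hne, hcnd.1, hcnd.2.1, hcnd.2.2⟩
        have hval : (Bsub - X'.lap k) σ τ = 0 := by
          rw [Matrix.sub_apply, hB, Matrix.submatrix_apply, hf,
            Eoff hsub k σ τ (Ne.symm hne), if_neg hcond]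
        rw [hval, abs_zero]
      calc ∑ τ ∈ T, |(Bsub - X'.lap k) σ τ| ≤ ∑ _τ ∈ T, (1:ℝ) :=
            Finset.sum_le_sum hEoffmem
        _ = (T.card : ℝ) := by rw [Finset.sum_const, nsmul_eq_mul, mul_one]
    have hTle : (T.card : ℝ) ≤ ((k:ℝ)+1) * ((X.fdeg σ.1 - X'.fdeg σ.1 : ℕ) : ℝ) := by
      have := Tcard hsub k σ
      calc (T.card : ℝ) ≤ (((k+1) * (X.fdeg σ.1 - X'.fdeg σ.1) : ℕ) : ℝ) := Nat.cast_le.mpr this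
        _ = ((k:ℝ)+1) * ((X.fdeg σ.1 - X'.fdeg σ.1 : ℕ) : ℝ) := by push_cast; ring
    have hdcast : ((X.fdeg σ.1 - X'.fdeg σ.1 : ℕ) : ℝ) ≤ (D : ℝ) := Nat.cast_le.mpr hdσ
    rw [hEσσ, hc]
    have hd0 : (0:ℝ) ≤ ((X.fdeg σ.1 - X'.fdeg σ.1 : ℕ) : ℝ) := Nat.cast_nonneg _
    nlinarith [hsum, hTle, hdcast, hd0]
  have hquadE : ∀ x : EuclideanSpace ℝ (X'.face (k+1)),
      ⟪x, Matrix.toEuclideanLin (Bsub - X'.lap k) x⟫_ℝ ≤ c * ‖x‖ ^ 2 :=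
    quad_le_of_eig_le hEh c (eigenvalues_le_of_rows hEh c hrow)
  have s1 : ithEig (X.lap k) i ≤ ithEig Bsub i :=
    cauchy_bound hlapX f (hf ▸ fmap_inj hsub (k+1)) i h1 h2
  have s2 : ithEig Bsub i - c ≤ ithEig (X'.lap k) i :=
    weyl_bound hBh hlapX' c hquadE i h1 h2
  rw [ge_iff_le]
  linarith
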